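/- Suppose u : ℝ × ℝ → ℝ (a function of n and t, for fixed α and δ > 0) is continuously differentiable, positive, and satisfies the implicit relation u(n,t) = (1 − αδ·t·u(n,t))·u₀(n·(1 − αδ·t·u(n,t))², α) on an open set where 1 − αδ·t·u > 0. Then u satisfies the Burgers-type PDE ∂u/∂t + 2αδ·n·u·∂u/∂n + αδ·u² = 0 and u(n,0) = u₀(n,α). -/

import Mathlib

/-- Pure algebra lemma extracted from the implicit differentiation. -/
lemma stmt16_alg (a d n t U A B ut un : ℝ) (ha : 0 < a) (hd : 0 < d) (hU : 0 < U)
    (hUA : U = (1 - a * d * t * U) * A)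
    (E1 : ut * (1 + a * d * t * (A + 2 * n * (1 - a * d * t * U) ^ 2 * B)) =
      -(a * d * U * (A + 2 * n * (1 - a * d * t * U) ^ 2 * B)))
    (E2 : un * (1 + a * d * t * (A + 2 * n * (1 - a * d * t * U) ^ 2 * B)) =
      (1 - a * d * t * U) ^ 3 * B) :
    ut + 2 * a * d * n * U * un + a * d * U ^ 2 = 0 := by
  have hK : 1 + a * d * t * (A + 2 * n * (1 - a * d * t * U) ^ 2 * B) ≠ 0 := by
    intro h
    have E1' := E1
    rw [h, mul_zero] at E1'
    have h3 : a * d * U * (A + 2 * n * (1 - a * d * t * U) ^ 2 * B) = 0 :=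
      neg_eq_zero.mp E1'.symm
    have hne : a * d * U ≠ 0 := by positivity
    have h2 : A + 2 * n * (1 - a * d * t * U) ^ 2 * B = 0 :=
      (mul_eq_zero.mp h3).resolve_left hne
    rw [h2, mul_zero, add_zero] at h
    norm_num at h
  have hprod : (ut + 2 * a * d * n * U * un + a * d * U ^ 2) *
      (1 + a * d * t * (A + 2 * n * (1 - a * d * t * U) ^ 2 * B)) = 0 := by
    linear_combination E1 + (2 * a * d * n * U) * E2 + (a * d * U) * hUA
  exact (mul_eq_zero.mp hprod).resolve_right hK

/-- If a positive `C¹` function `u(n,t)` satisfies the implicit relation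
`u = (1 − αδ t u) u₀(n (1 − αδ t u)², α)` on an open set where `1 − αδ t u > 0`,
then it solves the Burgers-type equation `∂u/∂t + 2αδ n u ∂u/∂n + αδ u² = 0`
there, and `u(n,0) = u₀(n,α)`. -/
theorem stmt16 (α δ : ℝ) (hα : 0 < α) (hδ : 0 < δ)
    (u₀ : ℝ × ℝ → ℝ) (hu₀ : ContDiff ℝ 1 u₀)
    (u : ℝ → ℝ → ℝ)
    (hu : ContDiff ℝ 1 (fun p : ℝ × ℝ => u p.1 p.2))
    (hpos : ∀ n t, 0 < u n t)
    (S : Set (ℝ × ℝ)) (hS : IsOpen S)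
    (hfac : ∀ p ∈ S, 0 < 1 - α * δ * p.2 * u p.1 p.2)
    (himp : ∀ p ∈ S, u p.1 p.2 =
      (1 - α * δ * p.2 * u p.1 p.2) *
        u₀ (p.1 * (1 - α * δ * p.2 * u p.1 p.2) ^ 2, α)) :
    (∀ p ∈ S,
      deriv (fun s => u p.1 s) p.2 +
        2 * α * δ * p.1 * u p.1 p.2 * deriv (fun m => u m p.2) p.1 +
        α * δ * (u p.1 p.2) ^ 2 = 0) ∧
    (∀ n : ℝ, (n, (0:ℝ)) ∈ S → u n 0 = u₀ (n, α)) := by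
  constructor
  · rintro ⟨n, t⟩ hp
    dsimp only
    -- the partial map x ↦ u₀ (x, α)
    set g₀ : ℝ → ℝ := fun x => u₀ (x, α) with hg₀def
    have hg₀diff : Differentiable ℝ g₀ := by
      intro x
      exact ((hu₀.differentiable one_ne_zero) (x, α)).comp x
        (differentiableAt_id.prodMk (differentiableAt_const α))
    set A : ℝ := u₀ (n * (1 - α * δ * t * u n t) ^ 2, α) with hAdef
    set B : ℝ := deriv g₀ (n * (1 - α * δ * t * u n t) ^ 2) with hBdef
    have hB : HasDerivAt g₀ B (n * (1 - α * δ * t * u n t) ^ 2) :=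
      (hg₀diff _).hasDerivAt
    -- differentiability of the partial maps of u
    have hft : HasDerivAt (fun s : ℝ => u n s) (deriv (fun s : ℝ => u n s) t) t := by
      have h1 : DifferentiableAt ℝ (fun s : ℝ => u n s) t :=
        ((hu.differentiable one_ne_zero) (n, t)).comp t
          ((differentiableAt_const n).prodMk differentiableAt_id)
      exact h1.hasDerivAt
    have hfn : HasDerivAt (fun m : ℝ => u m t) (deriv (fun m : ℝ => u m t) n) n := by
      have h1 : DifferentiableAt ℝ (fun m : ℝ => u m t) n :=
        by have := ((hu.differentiable one_ne_zero) (n, t)).comp n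
                    ((differentiableAt_id (𝕜 := ℝ) (x := n)).prodMk (differentiableAt_const t)); exact this
      exact h1.hasDerivAt
    set ut : ℝ := deriv (fun s : ℝ => u n s) t with hutdef
    set un : ℝ := deriv (fun m : ℝ => u m t) n with hundef
    -- t-direction implicit differentiation
    have hw' : HasDerivAt (fun s : ℝ => 1 - α * δ * s * u n s)
        (-(α * δ * (u n t + t * ut))) t := by
      have h2 : HasDerivAt (fun s : ℝ => α * δ * s) (α * δ) t := by
        simpa using (hasDerivAt_id t).const_mul (α * δ)
      have h3 := (h2.mul hft).const_sub 1
      exact h3.congr_deriv (by ring)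
    have hinner : HasDerivAt (fun s : ℝ => n * (1 - α * δ * s * u n s) ^ 2)
        (n * (2 * (1 - α * δ * t * u n t) * -(α * δ * (u n t + t * ut)))) t := by
      have h4 := (hw'.pow 2).const_mul n
      exact h4.congr_deriv (by ring)
    have hcomp : HasDerivAt (fun s : ℝ => u₀ (n * (1 - α * δ * s * u n s) ^ 2, α))
        (B * (n * (2 * (1 - α * δ * t * u n t) * -(α * δ * (u n t + t * ut))))) t := by
      exact hB.comp t hinner
    have hFt := hw'.mul hcomp
    have hev : (fun s : ℝ => u n s) =ᶠ[nhds t]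
        (fun s : ℝ => (1 - α * δ * s * u n s) *
          u₀ (n * (1 - α * δ * s * u n s) ^ 2, α)) := by
      have hc : ContinuousAt (fun s : ℝ => ((n : ℝ), s)) t :=
        (continuous_const.prodMk continuous_id).continuousAt
      have hmem : ∀ᶠ s in nhds t, ((n : ℝ), s) ∈ S := hc (hS.mem_nhds hp)
      filter_upwards [hmem] with s hs
      exact himp (n, s) hs
    have hut2 := hFt.congr_of_eventuallyEq hev
    have E1raw := hft.unique hut2
    -- n-direction implicit differentiation
    have hwn : HasDerivAt (fun m : ℝ => 1 - α * δ * t * u m t)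
        (-(α * δ * t * un)) n := by
      have h3 := (hfn.const_mul (α * δ * t)).const_sub 1
      convert h3 using 1 <;> ring
    have hinnern : HasDerivAt (fun m : ℝ => m * (1 - α * δ * t * u m t) ^ 2)
        ((1 - α * δ * t * u n t) ^ 2 +
          n * (2 * (1 - α * δ * t * u n t) * -(α * δ * t * un))) n := by
      have h4 := (hasDerivAt_id n).mul (hwn.pow 2)
      simp only [id_eq] at h4
      exact h4.congr_deriv (by simp only [Pi.pow_apply]; ring)
    have hcompn : HasDerivAt (fun m : ℝ => u₀ (m * (1 - α * δ * t * u m t) ^ 2, α))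
        (B * ((1 - α * δ * t * u n t) ^ 2 +
          n * (2 * (1 - α * δ * t * u n t) * -(α * δ * t * un)))) n := by
      exact hB.comp n hinnern
    have hFn := hwn.mul hcompn
    have hevn : (fun m : ℝ => u m t) =ᶠ[nhds n]
        (fun m : ℝ => (1 - α * δ * t * u m t) *
          u₀ (m * (1 - α * δ * t * u m t) ^ 2, α)) := by
      have hc : ContinuousAt (fun m : ℝ => (m, t)) n :=
        (continuous_id.prodMk continuous_const).continuousAt
      have hmem : ∀ᶠ m in nhds n, ((m : ℝ), t) ∈ S := hc (hS.mem_nhds hp)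
      filter_upwards [hmem] with m hm
      exact himp (m, t) hm
    have hun2 := hFn.congr_of_eventuallyEq hevn
    have E2raw := hfn.unique hun2
    -- assemble the clean equations
    have hUA : u n t = (1 - α * δ * t * u n t) * A := himp (n, t) hp
    have E1 : ut * (1 + α * δ * t *
        (A + 2 * n * (1 - α * δ * t * u n t) ^ 2 * B)) =
        -(α * δ * u n t * (A + 2 * n * (1 - α * δ * t * u n t) ^ 2 * B)) := by
      linear_combination E1raw
    have E2 : un * (1 + α * δ * t *
        (A + 2 * n * (1 - α * δ * t * u n t) ^ 2 * B)) =
        (1 - α * δ * t * u n t) ^ 3 * B := by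
      linear_combination E2raw
    exact stmt16_alg α δ n t (u n t) A B ut un hα hδ (hpos n t) hUA E1 E2
  · intro n hn
    have h := himp (n, 0) hn
    simpa using h
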